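/- Let U ⊆ ℂ be open, f : U → ℂ holomorphic, and z ∈ U with f′(z) ≠ 0. Set e^{2u} = 4|f′|²/(1+|f|²)² and ψ = 2f/(1+|f|²). Then at z: (i) e^{−2u}∂_z̄ψ = −f²/(2f′); (ii) e^{−2u}∂_z̄(Re ψ) = (1 − f²)/(4f′); (iii) e^{−2u}∂_z̄(Im ψ) = i(1 + f²)/(4f′). In particular the complex gradients of Re ψ and Im ψ with respect to the pullback metric are holomorphic wherever f′ is nonvanishing. -/

import Mathlib

set_option maxHeartbeats 1000000


/-- The Wirtinger derivative `∂_z̄ = ½(∂/∂x + i ∂/∂y)` of a complex-valued function on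
`ℂ ≃ ℝ²`, computed via the real Fréchet derivative. -/
noncomputable def dzbar (φ : ℂ → ℂ) (z : ℂ) : ℂ :=
  (1 / 2 : ℂ) * (fderiv ℝ φ z 1 + Complex.I * fderiv ℝ φ z Complex.I)

/-- For `f` holomorphic on an open `U ⊆ ℂ`, `z ∈ U` with `f′(z) ≠ 0`,
`e^{2u} = 4|f′|²/(1+|f|²)²` and `ψ = 2f/(1+|f|²)`, one has at `z`:
(i) `e^{-2u}∂_z̄ψ = -f²/(2f′)`; (ii) `e^{-2u}∂_z̄(Re ψ) = (1 - f²)/(4f′)`;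
(iii) `e^{-2u}∂_z̄(Im ψ) = i(1 + f²)/(4f′)`. In particular the complex gradients of `Re ψ`
and `Im ψ` are holomorphic wherever `f′` is nonvanishing. -/
theorem stmt_9 (U : Set ℂ) (hU : IsOpen U) (f : ℂ → ℂ)
    (hf : DifferentiableOn ℂ f U) (z : ℂ) (hz : z ∈ U) (hfz : deriv f z ≠ 0) :
    (((1 + ‖f z‖ ^ 2) ^ 2 / (4 * ‖deriv f z‖ ^ 2) : ℝ) : ℂ) *
        dzbar (fun w => 2 * f w / ((1 + ‖f w‖ ^ 2 : ℝ) : ℂ)) z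
      = -(f z) ^ 2 / (2 * deriv f z) ∧
    (((1 + ‖f z‖ ^ 2) ^ 2 / (4 * ‖deriv f z‖ ^ 2) : ℝ) : ℂ) *
        dzbar (fun w =>
          (((2 * f w / ((1 + ‖f w‖ ^ 2 : ℝ) : ℂ)).re : ℝ) : ℂ)) z
      = (1 - (f z) ^ 2) / (4 * deriv f z) ∧
    (((1 + ‖f z‖ ^ 2) ^ 2 / (4 * ‖deriv f z‖ ^ 2) : ℝ) : ℂ) *
        dzbar (fun w =>
          (((2 * f w / ((1 + ‖f w‖ ^ 2 : ℝ) : ℂ)).im : ℝ) : ℂ)) z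
      = Complex.I * (1 + (f z) ^ 2) / (4 * deriv f z) := by
  have hdf : DifferentiableAt ℂ f z := hf.differentiableAt (hU.mem_nhds hz)
  set c := deriv f z with hc
  set a := f z with ha
  -- cast facts
  have hcast : ∀ w : ℂ, ((1 + ‖f w‖ ^ 2 : ℝ) : ℂ)
      = 1 + f w * (starRingEnd ℂ) (f w) := by
    intro w
    push_cast
    rw [← Complex.ofReal_pow, Complex.sq_norm, Complex.mul_conj]
  have hdz : (1 : ℂ) + a * (starRingEnd ℂ) a ≠ 0 := by
    rw [Complex.mul_conj]
    intro h
    have : (1 : ℝ) + Complex.normSq a = 0 := by exact_mod_cast h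
    nlinarith [Complex.normSq_nonneg a]
  have hcc : (starRingEnd ℂ) c ≠ 0 := by simpa using hfz
  -- derivative machinery
  have hF : HasFDerivAt f ((ContinuousLinearMap.smulRight (1 : ℂ →L[ℂ] ℂ) c).restrictScalars ℝ) z :=
    (hdf.hasDerivAt).hasFDerivAt.restrictScalars ℝ
  set F := (ContinuousLinearMap.smulRight (1 : ℂ →L[ℂ] ℂ) c).restrictScalars ℝ with hFdef
  have hFc : HasFDerivAt (fun w => (starRingEnd ℂ) (f w))
      ((Complex.conjCLE.toContinuousLinearMap).comp F) z :=
    (Complex.conjCLE.toContinuousLinearMap.hasFDerivAt).comp z hF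
  have hd : HasFDerivAt (fun w => 1 + f w * (starRingEnd ℂ) (f w))
      (a • ((Complex.conjCLE.toContinuousLinearMap).comp F) + (starRingEnd ℂ) a • F) z :=
    (hF.mul hFc).const_add 1
  have hinv := (hasFDerivAt_inv' (𝕜 := ℝ) hdz).comp z hd
  have hnum : HasFDerivAt (fun w => (2 : ℂ) * f w) ((2 : ℂ) • F) z := hF.const_mul 2
  have hψ := hnum.mul hinv
  set ψ : ℂ → ℂ := fun w => 2 * f w * (1 + f w * (starRingEnd ℂ) (f w))⁻¹ with hψdef
  have hψ' : HasFDerivAt ψ _ z := hψ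
  -- rewrite the three functions in the goal
  have hfun1 : (fun w => 2 * f w / ((1 + ‖f w‖ ^ 2 : ℝ) : ℂ)) = ψ := by
    funext w; rw [hcast w, div_eq_mul_inv]
  have hfun2 : (fun w => (((2 * f w / ((1 + ‖f w‖ ^ 2 : ℝ) : ℂ)).re : ℝ) : ℂ))
      = fun w => (1/2 : ℂ) * (ψ w + (starRingEnd ℂ) (ψ w)) := by
    funext w
    rw [show (2 * f w / ((1 + ‖f w‖ ^ 2 : ℝ) : ℂ)) = ψ w by
      rw [hcast w, div_eq_mul_inv]]
    rw [Complex.add_conj]; push_cast; ring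
  have hfun3 : (fun w => (((2 * f w / ((1 + ‖f w‖ ^ 2 : ℝ) : ℂ)).im : ℝ) : ℂ))
      = fun w => (-Complex.I/2 : ℂ) * (ψ w - (starRingEnd ℂ) (ψ w)) := by
    funext w
    rw [show (2 * f w / ((1 + ‖f w‖ ^ 2 : ℝ) : ℂ)) = ψ w by
      rw [hcast w, div_eq_mul_inv]]
    have := Complex.sub_conj (ψ w)
    rw [this]; push_cast
    have : Complex.I * Complex.I = -1 := Complex.I_mul_I
    field_simp
    ring_nf
    rw [Complex.I_sq]; ring
  have hre : HasFDerivAt (fun w => (1/2 : ℂ) * (ψ w + (starRingEnd ℂ) (ψ w))) _ z :=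
    (hψ'.add ((Complex.conjCLE.toContinuousLinearMap.hasFDerivAt).comp z hψ')).const_mul (1/2)
  have him : HasFDerivAt (fun w => (-Complex.I/2 : ℂ) * (ψ w - (starRingEnd ℂ) (ψ w))) _ z :=
    (hψ'.sub ((Complex.conjCLE.toContinuousLinearMap.hasFDerivAt).comp z hψ')).const_mul
      (-Complex.I/2)
  -- now compute
  rw [hfun1, hfun2, hfun3]
  have habs : ∀ x : ℂ, ((‖x‖ : ℝ) : ℂ) ^ 2 = x * (starRingEnd ℂ) x := by
    intro x; rw [← Complex.ofReal_pow, Complex.sq_norm, Complex.mul_conj]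
  refine ⟨?_, ?_, ?_⟩
  · rw [dzbar, hψ'.fderiv]
    simp only [ContinuousLinearMap.add_apply, ContinuousLinearMap.smul_apply,
      ContinuousLinearMap.comp_apply, ContinuousLinearMap.coe_restrictScalars',
      ContinuousLinearMap.smulRight_apply, ContinuousLinearMap.one_apply,
      ContinuousLinearMap.neg_apply, ContinuousLinearMap.mulLeftRight_apply,
      Complex.conjCLE_apply, smul_eq_mul, map_add, map_mul, map_one, Complex.conj_conj,
      Complex.conj_I, map_inv₀, hFdef, Function.comp, ContinuousLinearEquiv.coe_coe, one_mul]
    push_cast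
    rw [habs a, habs c, ← ha]
    set b := (starRingEnd ℂ) a with hb
    set e := (starRingEnd ℂ) c with he
    set D := (1 : ℂ) + a * b with hD
    have hD0 : D ≠ 0 := hdz
    have he0 : e ≠ 0 := hcc
    clear_value b e D
    clear hb he hD hdz hcc
    refine Eq.trans (b := D ^ 2 / (4 * (c * e)) * (-2 * a ^ 2 * e * (D⁻¹ * D⁻¹))) ?_ ?_
    · congr 1
      ring_nf
      simp only [Complex.I_sq]
      ring
    · field_simp
      ring
  · rw [dzbar, hre.fderiv]
    simp only [ContinuousLinearMap.add_apply, ContinuousLinearMap.smul_apply,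
      ContinuousLinearMap.comp_apply, ContinuousLinearMap.coe_restrictScalars',
      ContinuousLinearMap.smulRight_apply, ContinuousLinearMap.one_apply,
      ContinuousLinearMap.neg_apply, ContinuousLinearMap.mulLeftRight_apply,
      Complex.conjCLE_apply, smul_eq_mul, map_add, map_mul, map_one, Complex.conj_conj,
      Complex.conj_I, map_inv₀, hFdef, Function.comp, ContinuousLinearEquiv.coe_coe, one_mul,
      map_neg, map_ofNat]
    push_cast
    rw [habs a, habs c, ← ha,
      show (1 : ℂ) + (starRingEnd ℂ) a * a = 1 + a * (starRingEnd ℂ) a from by ring]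
    set b := (starRingEnd ℂ) a with hb
    set e := (starRingEnd ℂ) c with he
    set D := (1 : ℂ) + a * b with hD
    have hD0 : D ≠ 0 := hdz
    have he0 : e ≠ 0 := hcc
    have hD0' : (1 : ℂ) + a * b ≠ 0 := hdz
    clear_value b e D
    clear hb he hdz hcc
    refine Eq.trans (b := D ^ 2 / (4 * (c * e)) * (e * (1 - a ^ 2) * (D⁻¹ * D⁻¹))) ?_ ?_
    · congr 1
      have hmul : D * D⁻¹ = 1 := mul_inv_cancel₀ hD0
      ring_nf
      simp only [Complex.I_sq]
      linear_combination (-(e * D⁻¹)) * hmul + (e * D⁻¹ ^ 2) * hD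
    · field_simp
  · rw [dzbar, him.fderiv]
    simp only [ContinuousLinearMap.add_apply, ContinuousLinearMap.smul_apply,
      ContinuousLinearMap.comp_apply, ContinuousLinearMap.coe_restrictScalars',
      ContinuousLinearMap.smulRight_apply, ContinuousLinearMap.one_apply,
      ContinuousLinearMap.neg_apply, ContinuousLinearMap.mulLeftRight_apply,
      Complex.conjCLE_apply, smul_eq_mul, map_add, map_mul, map_one, Complex.conj_conj,
      Complex.conj_I, map_inv₀, hFdef, Function.comp, ContinuousLinearEquiv.coe_coe, one_mul,
      map_neg, map_ofNat, ContinuousLinearMap.sub_apply, map_sub, map_div₀]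
    push_cast
    rw [habs a, habs c, ← ha,
      show (1 : ℂ) + (starRingEnd ℂ) a * a = 1 + a * (starRingEnd ℂ) a from by ring]
    set b := (starRingEnd ℂ) a with hb
    set e := (starRingEnd ℂ) c with he
    set D := (1 : ℂ) + a * b with hD
    have hD0 : D ≠ 0 := hdz
    have he0 : e ≠ 0 := hcc
    have hD0' : (1 : ℂ) + a * b ≠ 0 := hdz
    clear_value b e D
    clear hb he hdz hcc
    refine Eq.trans
      (b := D ^ 2 / (4 * (c * e)) * (Complex.I * e * (1 + a ^ 2) * (D⁻¹ * D⁻¹))) ?_ ?_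
    · congr 1
      have hmul : D * D⁻¹ = 1 := mul_inv_cancel₀ hD0
      ring_nf
      have h3 : Complex.I ^ 3 = -Complex.I := by
        rw [pow_succ, Complex.I_sq]; ring
      simp only [h3]
      linear_combination (-(Complex.I * e * D⁻¹)) * hmul + (Complex.I * e * D⁻¹ ^ 2) * hD
    · field_simp
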